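/- If (a_n) and (b_n) are increasing computable sequences of rationals converging to A and B respectively, and for every ε > 0 there exists n with A - a_n < ε(B - b_n), then A is not Martin-Löf random. -/

import Mathlib

open Filter MeasureTheory
open scoped ENNReal

/-- The open rational interval coded by an optional pair of rationals. -/
def intervalOf : Option (ℚ × ℚ) → Set ℝ
  | none => ∅
  | some (p, q) => Set.Ioo (p : ℝ) (q : ℝ)

/-- A Martin-Löf test: a uniformly computable enumeration `W` of rational intervals such
that the `k`-th open set `⋃ i, intervalOf (W k i)` has Lebesgue measure at most `2⁻ᵏ`. -/
def MLTest (W : ℕ → ℕ → Option (ℚ × ℚ)) : Prop :=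
  Computable₂ W ∧ ∀ k, volume (⋃ i, intervalOf (W k i)) ≤ (2 : ℝ≥0∞)⁻¹ ^ k

/-- A real is Martin-Löf random if it is not covered by any Martin-Löf test. -/
def MLRandom (A : ℝ) : Prop :=
  ∀ W : ℕ → ℕ → Option (ℚ × ℚ), MLTest W → ∃ k, A ∉ ⋃ i, intervalOf (W k i)



namespace NRAux

/-! ### Integer codes: `ℤ` coded as `ℕ` via `z ≥ 0 ↦ 2z`, `-(m+1) ↦ 2m+1`. -/

/-- decode an integer code -/
def c2z : ℕ → ℤ := fun c => if c % 2 = 0 then (c / 2 : ℕ) else Int.negSucc (c / 2)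

/-- encode an integer -/
def z2c : ℤ → ℕ := fun z => Int.casesOn z (fun n => 2 * n) (fun n => 2 * n + 1)

@[simp] lemma z2c_ofNat (n : ℕ) : z2c (Int.ofNat n) = 2 * n := rfl
@[simp] lemma z2c_negSucc (n : ℕ) : z2c (Int.negSucc n) = 2 * n + 1 := rfl
@[simp] lemma z2c_coe (n : ℕ) : z2c (n : ℤ) = 2 * n := rfl

lemma c2z_z2c (z : ℤ) : c2z (z2c z) = z := by
  cases z with
  | ofNat n =>
    show c2z (2 * n) = Int.ofNat n
    unfold c2z
    have h1 : 2 * n % 2 = 0 := by omega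
    have h2 : 2 * n / 2 = n := by omega
    rw [if_pos h1, h2]; rfl
  | negSucc n =>
    show c2z (2 * n + 1) = Int.negSucc n
    unfold c2z
    have h1 : ¬((2 * n + 1) % 2 = 0) := by omega
    have h2 : (2 * n + 1) / 2 = n := by omega
    rw [if_neg h1, h2]

lemma z2c_c2z (c : ℕ) : z2c (c2z c) = c := by
  unfold c2z
  rcases Nat.even_or_odd c with h | h
  · have h0 : c % 2 = 0 := Nat.even_iff.mp h
    rw [if_pos h0, z2c_coe]
    omega
  · have h1 : c % 2 = 1 := Nat.odd_iff.mp h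
    have h1' : ¬(c % 2 = 0) := by omega
    rw [if_neg h1', z2c_negSucc]
    omega

lemma c2z_injective : Function.Injective c2z := by
  intro x y h
  have := congrArg z2c h
  rwa [z2c_c2z, z2c_c2z] at this

/-- positive part of an integer code -/
def pA : ℕ → ℕ := fun c => if c % 2 = 0 then c / 2 else 0
/-- negative part of an integer code -/
def pB : ℕ → ℕ := fun c => if c % 2 = 0 then 0 else c / 2 + 1

lemma c2z_eq_pA_sub_pB (c : ℕ) : c2z c = (pA c : ℤ) - (pB c : ℤ) := by
  unfold c2z pA pB
  rcases Nat.even_or_odd c with h | h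
  · have : c % 2 = 0 := Nat.even_iff.mp h
    simp [this]
  · have h1 : c % 2 = 1 := Nat.odd_iff.mp h
    simp only [h1, Int.negSucc_eq, if_neg (by omega : ¬(1 = 0))]
    push_cast
    ring

/-- build an integer code from a difference of naturals -/
def unp : ℕ → ℕ → ℕ := fun x y => if y ≤ x then 2 * (x - y) else 2 * (y - x) - 1

lemma c2z_unp (x y : ℕ) : c2z (unp x y) = (x : ℤ) - (y : ℤ) := by
  unfold unp
  rcases le_or_gt y x with h | h
  · rw [if_pos h]
    have : c2z (2 * (x - y)) = ((x - y : ℕ) : ℤ) := by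
      show c2z (z2c (Int.ofNat (x - y))) = _
      rw [c2z_z2c]; rfl
    rw [this]; omega
  · rw [if_neg (not_le.mpr h)]
    have h2 : 2 * (y - x) - 1 = 2 * (y - x - 1) + 1 := by omega
    rw [h2]
    have : c2z (2 * (y - x - 1) + 1) = Int.negSucc (y - x - 1) := by
      show c2z (z2c (Int.negSucc (y - x - 1))) = _
      rw [c2z_z2c]
    rw [this, Int.negSucc_eq]
    omega

/-- code-level integer addition -/
def cadd : ℕ → ℕ → ℕ := fun c1 c2 => unp (pA c1 + pA c2) (pB c1 + pB c2)
/-- code-level integer multiplication -/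
def cmul : ℕ → ℕ → ℕ := fun c1 c2 =>
  unp (pA c1 * pA c2 + pB c1 * pB c2) (pA c1 * pB c2 + pB c1 * pA c2)
/-- code-level integer negation -/
def cneg : ℕ → ℕ := fun c => unp (pB c) (pA c)
/-- code-level integer comparison -/
def cle : ℕ → ℕ → Bool := fun c1 c2 => decide (pA c1 + pB c2 ≤ pA c2 + pB c1)

lemma c2z_cadd (c1 c2 : ℕ) : c2z (cadd c1 c2) = c2z c1 + c2z c2 := by
  rw [cadd, c2z_unp, c2z_eq_pA_sub_pB c1, c2z_eq_pA_sub_pB c2]; push_cast; ring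

lemma c2z_cmul (c1 c2 : ℕ) : c2z (cmul c1 c2) = c2z c1 * c2z c2 := by
  rw [cmul, c2z_unp, c2z_eq_pA_sub_pB c1, c2z_eq_pA_sub_pB c2]; push_cast; ring

lemma c2z_cneg (c : ℕ) : c2z (cneg c) = -c2z c := by
  rw [cneg, c2z_unp, c2z_eq_pA_sub_pB c]; push_cast; ring

lemma cle_iff (c1 c2 : ℕ) : cle c1 c2 = true ↔ c2z c1 ≤ c2z c2 := by
  rw [cle, decide_eq_true_iff, c2z_eq_pA_sub_pB, c2z_eq_pA_sub_pB]
  omega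

/-! ### Primrec facts -/

open Primrec in
lemma primrec_pA : Primrec pA :=
  Primrec.ite (PrimrecRel.comp Primrec.eq (nat_mod.comp .id (const 2)) (const 0))
    (nat_div.comp .id (const 2)) (const 0)

open Primrec in
lemma primrec_pB : Primrec pB :=
  Primrec.ite (PrimrecRel.comp Primrec.eq (nat_mod.comp .id (const 2)) (const 0))
    (const 0) (succ.comp (nat_div.comp .id (const 2)))

open Primrec in
lemma primrec_unp : Primrec₂ unp :=
  Primrec.ite (PrimrecRel.comp nat_le snd fst)
    (nat_mul.comp (const 2) (nat_sub.comp fst snd))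
    (nat_sub.comp (nat_mul.comp (const 2) (nat_sub.comp snd fst)) (const 1)) |>.to₂

open Primrec in
lemma primrec_cadd : Primrec₂ cadd :=
  (primrec_unp.comp
    (nat_add.comp (primrec_pA.comp fst) (primrec_pA.comp snd))
    (nat_add.comp (primrec_pB.comp fst) (primrec_pB.comp snd))).to₂

open Primrec in
lemma primrec_cmul : Primrec₂ cmul :=
  (primrec_unp.comp
    (nat_add.comp (nat_mul.comp (primrec_pA.comp fst) (primrec_pA.comp snd))
      (nat_mul.comp (primrec_pB.comp fst) (primrec_pB.comp snd)))
    (nat_add.comp (nat_mul.comp (primrec_pA.comp fst) (primrec_pB.comp snd))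
      (nat_mul.comp (primrec_pB.comp fst) (primrec_pA.comp snd)))).to₂

open Primrec in
lemma primrec_cneg : Primrec cneg :=
  primrec_unp.comp primrec_pB primrec_pA

open Primrec in
lemma primrec_cle : Primrec₂ cle :=
  ((PrimrecRel.comp nat_le
      (nat_add.comp (primrec_pA.comp (fst (β := ℕ))) (primrec_pB.comp snd))
      (nat_add.comp (primrec_pA.comp snd) (primrec_pB.comp fst))).decide : Primrec _).to₂

end NRAux

/-! ### gcd is primitive recursive -/

namespace NRAux

/-- One step of Euclid's algorithm. -/
def gstep : ℕ × ℕ → ℕ × ℕ := fun p => if p.1 = 0 then p else (p.2 % p.1, p.1)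

lemma gstep_fix (g : ℕ) : ∀ k, gstep^[k] (0, g) = (0, g) := by
  intro k
  induction k with
  | zero => rfl
  | succ k ih => rw [Function.iterate_succ_apply, gstep, if_pos rfl, ih]

lemma gstep_iter : ∀ a : ℕ, ∀ b k, a < k → gstep^[k] (a, b) = (0, Nat.gcd a b) := by
  intro a
  induction a using Nat.strong_induction_on with
  | _ a IH =>
    intro b k hk
    cases a with
    | zero =>
      obtain ⟨k', rfl⟩ : ∃ k', k = k' + 1 := ⟨k - 1, by omega⟩
      rw [Function.iterate_succ_apply, gstep, if_pos rfl, gstep_fix, Nat.gcd_zero_left]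
    | succ a0 =>
      set a := a0 + 1
      obtain ⟨k', rfl⟩ : ∃ k', k = k' + 1 := ⟨k - 1, by omega⟩
      rw [Function.iterate_succ_apply]
      have ha : a ≠ 0 := by omega
      rw [show gstep (a, b) = (b % a, a) from by simp [gstep, ha]]
      have hlt : b % a < a := Nat.mod_lt _ (by omega)
      rw [IH _ hlt a k' (by omega)]
      rw [Nat.gcd_rec a b]

open Primrec in
lemma primrec_gstep : Primrec gstep :=
  Primrec.ite (PrimrecRel.comp Primrec.eq fst (const 0)) Primrec.id
    ((nat_mod.comp snd fst).pair fst)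

open Primrec in
lemma primrec_gcd : Primrec₂ Nat.gcd := by
  have h : Primrec (fun p : ℕ × ℕ => (gstep^[p.1 + 1] p).2) :=
    snd.comp (nat_iterate (succ.comp fst) Primrec.id (primrec_gstep.comp snd).to₂)
  exact (h.of_eq fun p => by rw [gstep_iter p.1 p.2 (p.1+1) (by omega)]).to₂

/-! ### The explicit encoding of `ℚ` -/

/-- The explicit sigma-encoding of a rational. -/
def encQ0 : ℚ → ℕ := fun q => @Encodable.encode ℚ Rat.instEncodable q

lemma encode_int_eq (z : ℤ) : @Encodable.encode ℤ Int.encodable z = z2c z := by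
  cases z with
  | ofNat n =>
    show Equiv.intEquivNat (Int.ofNat n) = 2 * n
    rw [Equiv.intEquivNat, Equiv.trans_apply, Equiv.natSumNatEquivNat_apply]
    rfl
  | negSucc n =>
    show Equiv.intEquivNat (Int.negSucc n) = 2 * n + 1
    rw [Equiv.intEquivNat, Equiv.trans_apply, Equiv.natSumNatEquivNat_apply]
    rfl

lemma encQ0_eq (q : ℚ) : encQ0 q = Nat.pair (z2c q.num) q.den := by
  rcases q with ⟨n, d, hd, hc⟩
  show Nat.pair (@Encodable.encode ℤ Int.encodable n) d = _
  rw [encode_int_eq]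

end NRAux

namespace NRAux

/-- decidable predicate (as `Bool`) for membership in the range of `encQ0` -/
def Pb : ℕ → Bool := fun m =>
  (decide (0 < m.unpair.2)) && (Nat.gcd (if m.unpair.1 % 2 = 0 then m.unpair.1 / 2
    else m.unpair.1 / 2 + 1) m.unpair.2 == 1)

lemma natAbs_c2z (c : ℕ) : (c2z c).natAbs = if c % 2 = 0 then c / 2 else c / 2 + 1 := by
  unfold c2z
  split
  · exact Int.natAbs_natCast _
  · rfl

open Primrec in
lemma primrec_Pb : Primrec Pb := by
  have h1 : Primrec (fun m : ℕ => (Nat.unpair m).1) := fst.comp unpair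
  have h2 : Primrec (fun m : ℕ => (Nat.unpair m).2) := snd.comp unpair
  have habs : Primrec (fun m : ℕ => if (Nat.unpair m).1 % 2 = 0 then (Nat.unpair m).1 / 2
      else (Nat.unpair m).1 / 2 + 1) :=
    Primrec.ite (PrimrecRel.comp Primrec.eq (nat_mod.comp h1 (const 2)) (const 0))
      (nat_div.comp h1 (const 2)) (succ.comp (nat_div.comp h1 (const 2)))
  exact (Primrec.dom_bool₂ (· && ·)).comp
    (PrimrecRel.comp nat_lt (const 0) h2).decide
    (Primrec.beq.comp (primrec_gcd.comp habs h2) (const 1))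

lemma Pb_iff (m : ℕ) : Pb m = true ↔ m ∈ Set.range encQ0 := by
  constructor
  · intro h
    rw [Pb, Bool.and_eq_true, decide_eq_true_iff, beq_iff_eq] at h
    obtain ⟨hpos, hgcd⟩ := h
    rw [← natAbs_c2z] at hgcd
    refine ⟨⟨c2z m.unpair.1, m.unpair.2, by omega, hgcd⟩, ?_⟩
    rw [encQ0_eq]
    show Nat.pair (z2c (c2z m.unpair.1)) m.unpair.2 = m
    rw [z2c_c2z, Nat.pair_unpair]
  · rintro ⟨q, rfl⟩
    rw [encQ0_eq, Pb]
    rw [Bool.and_eq_true, decide_eq_true_iff, beq_iff_eq]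
    rw [Nat.unpair_pair]
    constructor
    · exact q.pos
    · rw [← natAbs_c2z, c2z_z2c]
      exact q.reduced

lemma ex_Pb_gt (x : ℕ) : ∃ m, x < m ∧ Pb m = true := by
  refine ⟨Nat.pair (2 * (x + 1)) 1, ?_, ?_⟩
  · calc x < 2 * (x + 1) := by omega
      _ ≤ Nat.pair (2 * (x + 1)) 1 := Nat.left_le_pair _ _
  · rw [Pb, Bool.and_eq_true, decide_eq_true_iff, beq_iff_eq, Nat.unpair_pair]
    exact ⟨by omega, by simp [Nat.gcd_one_right]⟩

lemma ex_Pb : ∃ m, Pb m = true := ⟨_, (ex_Pb_gt 0).choose_spec.2⟩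

/-- the `k`-th element of the range of `encQ0`, in increasing order -/
def mth : ℕ → ℕ := fun k =>
  Nat.rec (Nat.find ex_Pb) (fun _ p => Nat.find (ex_Pb_gt p)) k

@[simp] lemma mth_zero : mth 0 = Nat.find ex_Pb := rfl
@[simp] lemma mth_succ (k : ℕ) : mth (k + 1) = Nat.find (ex_Pb_gt (mth k)) := rfl

section
variable {s : Set ℕ} [DecidablePred (· ∈ s)] [Infinite s]

lemma subtype_ofNat_eq_mth (hs : ∀ m, m ∈ s ↔ Pb m = true) :
    ∀ k, ((Nat.Subtype.ofNat s k : s) : ℕ) = mth k := by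
  intro k
  induction k with
  | zero =>
    show ((⊥ : s) : ℕ) = Nat.find ex_Pb
    have h1 : Nat.find ex_Pb ≤ ((⊥ : s) : ℕ) :=
      Nat.find_min' ex_Pb ((hs _).mp (⊥ : s).2)
    have h2 : ((⊥ : s) : ℕ) ≤ Nat.find ex_Pb := by
      have hmem : Nat.find ex_Pb ∈ s := (hs _).mpr (Nat.find_spec ex_Pb)
      exact_mod_cast (bot_le : (⊥ : s) ≤ ⟨Nat.find ex_Pb, hmem⟩)
    omega
  | succ k ih =>
    show ((Nat.Subtype.succ (Nat.Subtype.ofNat s k) : s) : ℕ) = Nat.find (ex_Pb_gt (mth k))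
    set x := Nat.Subtype.ofNat s k
    have h1 : Nat.find (ex_Pb_gt (mth k)) ≤ ((Nat.Subtype.succ x : s) : ℕ) := by
      refine Nat.find_min' (ex_Pb_gt (mth k)) ⟨?_, (hs _).mp (Nat.Subtype.succ x).2⟩
      rw [← ih]
      exact_mod_cast Nat.Subtype.lt_succ_self x
    have h2 : ((Nat.Subtype.succ x : s) : ℕ) ≤ Nat.find (ex_Pb_gt (mth k)) := by
      have hspec := Nat.find_spec (ex_Pb_gt (mth k))
      have hmem : Nat.find (ex_Pb_gt (mth k)) ∈ s := (hs _).mpr hspec.2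
      have hlt : x < (⟨Nat.find (ex_Pb_gt (mth k)), hmem⟩ : s) := by
        have h : (x : ℕ) < Nat.find (ex_Pb_gt (mth k)) := by rw [ih]; exact hspec.1
        exact h
      exact_mod_cast Nat.Subtype.succ_le_of_lt hlt
    omega

end

end NRAux

namespace NRAux

lemma find_eq_find {P Q : ℕ → Prop} [DecidablePred P] [DecidablePred Q]
    (h : ∀ n, P n ↔ Q n) (hP : ∃ n, P n) (hQ : ∃ n, Q n) : Nat.find hP = Nat.find hQ := by
  apply le_antisymm
  · exact Nat.find_min' hP ((h _).mpr (Nat.find_spec hQ))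
  · exact Nat.find_min' hQ ((h _).mp (Nat.find_spec hP))

/-- computability of `Nat.find` over a computable boolean predicate -/
lemma computable_findP {α : Type*} [Primcodable α] {p : α → ℕ → Bool} (hp : Computable₂ p)
    (hex : ∀ x, ∃ n, p x n = true) :
    Computable fun x => Nat.find (hex x) := by
  have h1 : Partrec fun x => Nat.rfind (fun n => (Part.some (p x n) : Part Bool)) :=
    Partrec.rfind (hp.partrec₂)
  apply h1.of_eq_tot
  intro x
  refine Nat.mem_rfind.mpr ?_
  constructor
  · exact Part.mem_some_iff.mpr (Nat.find_spec (hex x)).symm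
  · intro m hm
    have := Nat.find_min (hex x) hm
    exact Part.mem_some_iff.mpr (by simpa using this)

lemma computable_mth : Computable mth := by
  have hex0 : ∀ _ : Unit, ∃ n, Pb n = true := fun _ => ex_Pb
  have hexs : ∀ x : ℕ, ∃ n, (decide (x < n) && Pb n) = true := by
    intro x
    obtain ⟨m, hm1, hm2⟩ := ex_Pb_gt x
    exact ⟨m, by simp [hm1, hm2]⟩
  have hlstep : Computable fun x => Nat.find (hexs x) := by
    apply computable_findP
    exact Primrec₂.to_comp <| ((Primrec.dom_bool₂ (· && ·)).comp
      (PrimrecRel.comp Primrec.nat_lt Primrec.fst Primrec.snd).decide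
      (primrec_Pb.comp Primrec.snd)).to₂
  have hfind0 : Computable fun _ : ℕ => Nat.find ex_Pb := Computable.const _
  have : Computable fun k : ℕ =>
      Nat.rec (motive := fun _ => ℕ) (Nat.find ex_Pb) (fun _ p => Nat.find (hexs p)) k := by
    exact Computable.nat_rec (f := @id ℕ) (g := fun _ => Nat.find ex_Pb)
      (h := fun _ pr => Nat.find (hexs pr.2)) Computable.id hfind0
      ((hlstep.comp (Computable.snd.comp Computable.snd)).to₂)
  apply this.of_eq
  intro k
  induction k with
  | zero => rfl
  | succ k ih =>
    show Nat.find (hexs _) = Nat.find (ex_Pb_gt (mth k))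
    rw [ih]
    exact find_eq_find (fun n => by simp) _ _

lemma range_encQ0 : Set.range encQ0 = Set.range (@Encodable.encode ℚ Rat.instEncodable) := rfl

lemma encQ0_ofNat (n : ℕ) : encQ0 (Denumerable.ofNat ℚ n) = mth n := by
  letI : DecidablePred (· ∈ Set.range (@Encodable.encode ℚ Rat.instEncodable)) :=
    Encodable.decidableRangeEncode ℚ
  letI : Infinite (Set.range (@Encodable.encode ℚ Rat.instEncodable)) :=
    Infinite.of_injective _ (Equiv.ofInjective _ Encodable.encode_injective).injective
  letI : Denumerable (Set.range (@Encodable.encode ℚ Rat.instEncodable)) :=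
    Nat.Subtype.denumerable _
  have h0 : Denumerable.ofNat ℚ n =
      (Encodable.equivRangeEncode ℚ).symm
        (Nat.Subtype.ofNat (Set.range (@Encodable.encode ℚ Rat.instEncodable)) n) := by
    show @Denumerable.ofNat ℚ
        (Denumerable.ofEquiv _ (Encodable.equivRangeEncode ℚ)) n = _
    rw [Denumerable.ofEquiv_ofNat]
    rfl
  rw [h0]
  have h1 : encQ0 ((Encodable.equivRangeEncode ℚ).symm
      (Nat.Subtype.ofNat (Set.range (@Encodable.encode ℚ Rat.instEncodable)) n)) =
      ((Nat.Subtype.ofNat (Set.range (@Encodable.encode ℚ Rat.instEncodable)) n : _) : ℕ) := by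
    have := (Encodable.equivRangeEncode ℚ).apply_symm_apply
      (Nat.Subtype.ofNat (Set.range (@Encodable.encode ℚ Rat.instEncodable)) n)
    exact congrArg Subtype.val this
  rw [h1]
  exact subtype_ofNat_eq_mth (s := Set.range (@Encodable.encode ℚ Rat.instEncodable))
    (fun m => (Pb_iff m).symm) n

lemma computable_encQ0 : Computable encQ0 := by
  apply (computable_mth.comp Computable.encode).of_eq
  intro q
  rw [← encQ0_ofNat, Denumerable.ofNat_encode]

end NRAux

namespace NRAux

/-- numerator code of a rational -/
def nc (q : ℚ) : ℕ := (encQ0 q).unpair.1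
/-- denominator of a rational -/
def dc (q : ℚ) : ℕ := (encQ0 q).unpair.2

lemma nc_eq (q : ℚ) : nc q = z2c q.num := by rw [nc, encQ0_eq, Nat.unpair_pair]
lemma dc_eq (q : ℚ) : dc q = q.den := by rw [dc, encQ0_eq, Nat.unpair_pair]

lemma computable_nc : Computable nc :=
  (Primrec.fst.comp Primrec.unpair).to_comp.comp computable_encQ0
lemma computable_dc : Computable dc :=
  (Primrec.snd.comp Primrec.unpair).to_comp.comp computable_encQ0

lemma num_den_cross {q : ℚ} {z : ℤ} {d : ℕ} (hd : d ≠ 0) :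
    q = (z : ℚ) / (d : ℚ) ↔ q.num * (d : ℤ) = z * (q.den : ℤ) := by
  have hden : ((q.den : ℚ)) ≠ 0 := by
    exact_mod_cast q.den_nz
  have hd' : ((d : ℚ)) ≠ 0 := by exact_mod_cast hd
  constructor
  · intro h
    have h2 : (q.num : ℚ) / (q.den : ℚ) = (z : ℚ) / (d : ℚ) := by
      rw [Rat.num_div_den]; exact h
    rw [div_eq_div_iff hden hd'] at h2
    exact_mod_cast h2
  · intro h
    have h2 : (q.num : ℚ) * (d : ℚ) = (z : ℚ) * (q.den : ℚ) := by exact_mod_cast h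
    rw [← div_eq_div_iff hden hd'] at h2
    rw [← h2, Rat.num_div_den]

/-- the boolean test used in the search defining `mkq` -/
def mkqTest : ℕ × ℕ → ℕ → Bool := fun p n =>
  (p.2 == 0) || (cmul (mth n).unpair.1 (2 * p.2) == cmul p.1 (2 * (mth n).unpair.2))

lemma ofNat_surj (q : ℚ) : ∃ n, Denumerable.ofNat ℚ n = q :=
  ⟨_, Denumerable.ofNat_encode q⟩

lemma mkqTest_ex (p : ℕ × ℕ) : ∃ n, mkqTest p n = true := by
  rcases Nat.eq_zero_or_pos p.2 with h | h
  · exact ⟨0, by simp [mkqTest, h]⟩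
  · set q0 : ℚ := (c2z p.1 : ℚ) / (p.2 : ℚ) with hq0
    obtain ⟨n0, hn0⟩ := ofNat_surj q0
    refine ⟨n0, ?_⟩
    have hc : q0.num * (p.2 : ℤ) = c2z p.1 * (q0.den : ℤ) :=
      (num_den_cross (by omega)).mp hq0
    have hm : mth n0 = encQ0 q0 := by rw [← encQ0_ofNat, hn0]
    rw [mkqTest, hm, encQ0_eq, Nat.unpair_pair]
    apply Bool.or_eq_true_iff.mpr
    right
    apply beq_iff_eq.mpr
    apply c2z_injective
    rw [c2z_cmul, c2z_cmul]
    have h1 : c2z (z2c q0.num) = q0.num := c2z_z2c _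
    have h2 : c2z (2 * p.2) = (p.2 : ℤ) := by
      rw [← z2c_coe, c2z_z2c]
    have h3 : c2z (2 * q0.den) = (q0.den : ℤ) := by
      rw [← z2c_coe, c2z_z2c]
    rw [h1, h2, h3, hc]

/-- build the rational `z/d` from an integer code `c` for `z` and a denominator `d` -/
def mkq (c d : ℕ) : ℚ := Denumerable.ofNat ℚ (Nat.find (mkqTest_ex (c, d)))

lemma mkq_spec (c d : ℕ) (hd : d ≠ 0) : mkq c d = (c2z c : ℚ) / (d : ℚ) := by
  have hspec := Nat.find_spec (mkqTest_ex (c, d))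
  set n0 := Nat.find (mkqTest_ex (c, d))
  rw [mkqTest] at hspec
  rcases Bool.or_eq_true_iff.mp hspec with h | h
  · exact absurd (beq_iff_eq.mp h) hd
  · set q : ℚ := Denumerable.ofNat ℚ n0 with hq
    have hm : mth n0 = encQ0 q := by rw [hq, encQ0_ofNat]
    rw [hm, encQ0_eq, Nat.unpair_pair] at h
    have h' := congrArg c2z (beq_iff_eq.mp h)
    rw [c2z_cmul, c2z_cmul, c2z_z2c] at h'
    have h2 : c2z (2 * d) = (d : ℤ) := by rw [← z2c_coe, c2z_z2c]
    have h3 : c2z (2 * q.den) = (q.den : ℤ) := by rw [← z2c_coe, c2z_z2c]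
    rw [h2, h3] at h'
    exact (num_den_cross hd).mpr h'

open Primrec in
lemma computable_mkq : Computable₂ mkq := by
  have ppow : Primrec₂ (· ^ · : ℕ → ℕ → ℕ) := Primrec₂.unpaired'.mp Nat.Primrec.pow
  have hmth2 : Computable₂ (fun (_ : ℕ × ℕ) n => mth n) := (computable_mth.comp Computable.snd).to₂
  have hup1 : Computable₂ (fun (p : ℕ × ℕ) n => (mth n).unpair.1) :=
    ((fst.comp unpair).to_comp.comp (computable_mth.comp Computable.snd)).to₂
  have hup2 : Computable₂ (fun (p : ℕ × ℕ) n => (mth n).unpair.2) :=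
    ((snd.comp unpair).to_comp.comp (computable_mth.comp Computable.snd)).to₂
  have htest : Computable₂ mkqTest := by
    apply Computable₂.mk
    have c1 : Computable (fun x : (ℕ × ℕ) × ℕ => (x.1.2 == 0)) :=
      (Primrec.beq.comp (snd.comp fst) (const 0)).to_comp
    have c2 : Computable (fun x : (ℕ × ℕ) × ℕ =>
        (cmul (mth x.2).unpair.1 (2 * x.1.2) == cmul x.1.1 (2 * (mth x.2).unpair.2))) := by
      have m1 : Computable (fun x : (ℕ × ℕ) × ℕ => cmul (mth x.2).unpair.1 (2 * x.1.2)) :=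
        primrec_cmul.to_comp.comp
          (((fst.comp unpair)).to_comp.comp (computable_mth.comp Computable.snd))
          ((nat_mul.comp (const 2) (snd.comp fst)).to_comp)
      have m2 : Computable (fun x : (ℕ × ℕ) × ℕ => cmul x.1.1 (2 * (mth x.2).unpair.2)) :=
        primrec_cmul.to_comp.comp
          ((fst.comp fst).to_comp)
          (nat_mul.to_comp.comp (Computable.const 2)
            ((snd.comp unpair).to_comp.comp (computable_mth.comp Computable.snd)))
      exact Primrec.beq.to_comp.comp m1 m2
    exact (Primrec.or.to_comp.comp c1 c2).of_eq fun x => rfl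
  have hfind : Computable fun p : ℕ × ℕ => Nat.find (mkqTest_ex p) :=
    computable_findP htest mkqTest_ex
  exact Computable₂.mk <| (Computable.ofNat ℚ).comp (hfind.of_eq fun p => by rcases p with ⟨c, d⟩; rfl)

end NRAux

namespace NRAux

/-! ### Computable field operations on `ℚ` -/

def qadd (q r : ℚ) : ℚ := mkq (cadd (cmul (nc q) (2 * dc r)) (cmul (nc r) (2 * dc q))) (dc q * dc r)
def qneg (q : ℚ) : ℚ := mkq (cneg (nc q)) (dc q)
def qsub (q r : ℚ) : ℚ := qadd q (qneg r)
def qmul (q r : ℚ) : ℚ := mkq (cmul (nc q) (nc r)) (dc q * dc r)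
def qleb (q r : ℚ) : Bool := cle (cmul (nc q) (2 * dc r)) (cmul (nc r) (2 * dc q))
def qmax (q r : ℚ) : ℚ := bif qleb q r then r else q

lemma c2z_two_mul (d : ℕ) : c2z (2 * d) = (d : ℤ) := by rw [← z2c_coe, c2z_z2c]

lemma den_cast_ne (q : ℚ) : ((q.den : ℚ)) ≠ 0 := by
  exact_mod_cast q.den_nz

lemma den_cast_pos (q : ℚ) : (0 : ℚ) < (q.den : ℚ) := by
  exact_mod_cast q.pos

lemma qadd_eq (q r : ℚ) : qadd q r = q + r := by
  rw [qadd, mkq_spec _ _ (by simp [dc_eq, q.den_nz, r.den_nz]),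
    c2z_cadd, c2z_cmul, c2z_cmul, nc_eq, nc_eq, c2z_z2c, c2z_z2c,
    dc_eq, dc_eq, c2z_two_mul, c2z_two_mul]
  conv_rhs => rw [← Rat.num_div_den q, ← Rat.num_div_den r]
  rw [div_add_div _ _ (den_cast_ne q) (den_cast_ne r)]
  push_cast
  ring_nf

lemma qneg_eq (q : ℚ) : qneg q = -q := by
  rw [qneg, mkq_spec _ _ (by simp [dc_eq, q.den_nz]), c2z_cneg, nc_eq, c2z_z2c, dc_eq]
  conv_rhs => rw [← Rat.num_div_den q]
  push_cast
  rw [neg_div]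

lemma qsub_eq (q r : ℚ) : qsub q r = q - r := by
  rw [qsub, qadd_eq, qneg_eq, sub_eq_add_neg]

lemma qmul_eq (q r : ℚ) : qmul q r = q * r := by
  rw [qmul, mkq_spec _ _ (by simp [dc_eq, q.den_nz, r.den_nz]),
    c2z_cmul, nc_eq, nc_eq, c2z_z2c, c2z_z2c, dc_eq, dc_eq]
  conv_rhs => rw [← Rat.num_div_den q, ← Rat.num_div_den r]
  rw [div_mul_div_comm]
  push_cast
  ring_nf

lemma qleb_iff (q r : ℚ) : qleb q r = true ↔ q ≤ r := by
  rw [qleb, cle_iff, c2z_cmul, c2z_cmul, nc_eq, nc_eq, c2z_z2c, c2z_z2c,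
    dc_eq, dc_eq, c2z_two_mul, c2z_two_mul]
  constructor
  · intro h
    have h2 : (q.num : ℚ) * (r.den : ℚ) ≤ (r.num : ℚ) * (q.den : ℚ) := by exact_mod_cast h
    rw [← div_le_div_iff₀ (den_cast_pos q) (den_cast_pos r)] at h2
    rwa [Rat.num_div_den, Rat.num_div_den] at h2
  · intro h
    have h2 : (q.num : ℚ) / (q.den : ℚ) ≤ (r.num : ℚ) / (r.den : ℚ) := by
      rwa [Rat.num_div_den, Rat.num_div_den]
    rw [div_le_div_iff₀ (den_cast_pos q) (den_cast_pos r)] at h2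
    exact_mod_cast h2

lemma qmax_eq (q r : ℚ) : qmax q r = max q r := by
  rw [qmax, max_def]
  rcases hle : qleb q r with h | h
  · have : ¬(q ≤ r) := fun hc => by simp [(qleb_iff q r).mpr hc] at hle
    simp [this, if_neg this]
  · have : q ≤ r := (qleb_iff q r).mp hle
    simp [this, if_pos this]

open Computable in
lemma computable_qadd : Computable₂ qadd := by
  apply Computable₂.mk
  apply computable_mkq.comp
  · exact primrec_cadd.to_comp.comp
      (primrec_cmul.to_comp.comp (computable_nc.comp fst)
        (Primrec.nat_mul.to_comp.comp (const 2) (computable_dc.comp snd)))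
      (primrec_cmul.to_comp.comp (computable_nc.comp snd)
        (Primrec.nat_mul.to_comp.comp (const 2) (computable_dc.comp fst)))
  · exact Primrec.nat_mul.to_comp.comp (computable_dc.comp fst) (computable_dc.comp snd)

open Computable in
lemma computable_qneg : Computable qneg :=
  computable_mkq.comp (primrec_cneg.to_comp.comp computable_nc) computable_dc

open Computable in
lemma computable_qsub : Computable₂ qsub := by
  apply Computable₂.mk
  exact computable_qadd.comp fst (computable_qneg.comp snd)

open Computable in
lemma computable_qmul : Computable₂ qmul := by
  apply Computable₂.mk
  apply computable_mkq.comp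
  · exact primrec_cmul.to_comp.comp (computable_nc.comp fst) (computable_nc.comp snd)
  · exact Primrec.nat_mul.to_comp.comp (computable_dc.comp fst) (computable_dc.comp snd)

open Computable in
lemma computable_qleb : Computable₂ qleb := by
  apply Computable₂.mk
  exact primrec_cle.to_comp.comp
    (primrec_cmul.to_comp.comp (computable_nc.comp fst)
      (Primrec.nat_mul.to_comp.comp (const 2) (computable_dc.comp snd)))
    (primrec_cmul.to_comp.comp (computable_nc.comp snd)
      (Primrec.nat_mul.to_comp.comp (const 2) (computable_dc.comp fst)))

open Computable in
lemma computable_qmax : Computable₂ qmax := by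
  apply Computable₂.mk
  exact Computable.cond (computable_qleb.comp fst snd) snd fst

end NRAux

namespace NRAux

/-! ### The test construction -/

/-- `1 / (2 * M * 2^k)` as a rational -/
def eps (M k : ℕ) : ℚ := mkq 2 (2 * M * 2 ^ k)

lemma c2z_two : c2z 2 = 1 := by
  have : z2c ((1 : ℕ) : ℤ) = 2 := rfl
  rw [← this, c2z_z2c]; rfl

lemma eps_eq (M k : ℕ) (hM : 0 < M) :
    eps M k = (((2 * M * 2 ^ k : ℕ) : ℚ))⁻¹ := by
  rw [eps, mkq_spec _ _ (by positivity), c2z_two]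
  rw [Int.cast_one, one_div]

lemma eps_pos (M k : ℕ) (hM : 0 < M) : 0 < eps M k := by
  rw [eps_eq M k hM]
  positivity

open Computable in
lemma computable_eps (M : ℕ) : Computable (eps M) := by
  have ppow : Primrec₂ (· ^ · : ℕ → ℕ → ℕ) := Primrec₂.unpaired'.mp Nat.Primrec.pow
  exact computable_mkq.comp (const 2)
    (Primrec.nat_mul.to_comp.comp (const (2 * M)) (ppow.to_comp.comp (const 2) Computable.id))

/-- the frontier of the greedy covering process -/
def frontier (a b : ℕ → ℚ) (e : ℚ) : ℕ → ℚ := fun s =>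
  Nat.rec (a 0) (fun t fr => qadd (qmax fr (a t)) (qmul e (qsub (b (t + 1)) (b t)))) s

@[simp] lemma frontier_zero (a b : ℕ → ℚ) (e : ℚ) : frontier a b e 0 = a 0 := rfl

lemma frontier_succ (a b : ℕ → ℚ) (e : ℚ) (s : ℕ) :
    frontier a b e (s + 1) =
      max (frontier a b e s) (a s) + e * (b (s + 1) - b s) := by
  show qadd (qmax (frontier a b e s) (a s)) (qmul e (qsub (b (s + 1)) (b s))) = _
  rw [qadd_eq, qmax_eq, qmul_eq, qsub_eq]

/-- the Martin-Löf test -/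
def testW (a b : ℕ → ℚ) (M : ℕ) : ℕ → ℕ → Option (ℚ × ℚ) := fun k s =>
  some (qsub (qmax (frontier a b (eps M k) s) (a s)) (qmul (eps M k) (qsub (b (s + 1)) (b s))),
        qadd (qmax (frontier a b (eps M k) s) (a s)) (qmul (eps M k) (qsub (b (s + 1)) (b s))))

lemma testW_fst (a b : ℕ → ℚ) (M k s : ℕ) :
    testW a b M k s = some
      (max (frontier a b (eps M k) s) (a s) - eps M k * (b (s + 1) - b s),
       max (frontier a b (eps M k) s) (a s) + eps M k * (b (s + 1) - b s)) := by
  rw [testW]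
  rw [qsub_eq, qadd_eq, qmax_eq, qmul_eq, qsub_eq]

open Computable in
lemma computable_testW (a b : ℕ → ℚ) (ha : Computable a) (hb : Computable b) (M : ℕ) :
    Computable₂ (testW a b M) := by
  apply Computable₂.mk
  have hfr : Computable fun p : ℕ × ℕ => frontier a b (eps M p.1) p.2 := by
    have := Computable.nat_rec (f := fun p : ℕ × ℕ => p.2)
      (g := fun _ : ℕ × ℕ => a 0)
      (h := fun (p : ℕ × ℕ) (pr : ℕ × ℚ) =>
        qadd (qmax pr.2 (a pr.1)) (qmul (eps M p.1) (qsub (b (pr.1 + 1)) (b pr.1))))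
      snd (const (a 0))
      (by
        apply Computable₂.mk
        apply computable_qadd.comp
        · exact computable_qmax.comp (snd.comp snd) (ha.comp (fst.comp snd))
        · apply computable_qmul.comp
          · exact (computable_eps M).comp (fst.comp fst)
          · exact computable_qsub.comp
              (hb.comp (Primrec.succ.to_comp.comp (fst.comp snd)))
              (hb.comp (fst.comp snd)))
    apply this.of_eq
    rintro ⟨k, s⟩
    induction s with
    | zero => rfl
    | succ t ih =>
      have h2 : frontier a b (eps M k) (t + 1) =
          qadd (qmax (frontier a b (eps M k) t) (a t))
            (qmul (eps M k) (qsub (b (t + 1)) (b t))) := rfl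
      rw [h2, ← ih]
  have hL : Computable fun p : ℕ × ℕ => qmax (frontier a b (eps M p.1) p.2) (a p.2) :=
    computable_qmax.comp hfr (ha.comp snd)
  have hδ : Computable fun p : ℕ × ℕ => qmul (eps M p.1) (qsub (b (p.2 + 1)) (b p.2)) :=
    computable_qmul.comp ((computable_eps M).comp fst)
      (computable_qsub.comp (hb.comp (Primrec.succ.to_comp.comp snd)) (hb.comp snd))
  exact option_some.comp ((computable_qsub.comp hL hδ).pair (computable_qadd.comp hL hδ))

end NRAux

open NRAux in
/-- If for every `ε > 0` some `n` has `A - a n < ε (B - b n)`, then `A` is not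
Martin-Löf random. -/
theorem not_random_of_fast_b (a b : ℕ → ℚ) (A B : ℝ)
    (ha : Computable a) (hb : Computable b) (hma : StrictMono a) (hmb : StrictMono b)
    (hA : Tendsto (fun n => (a n : ℝ)) atTop (nhds A))
    (hB : Tendsto (fun n => (b n : ℝ)) atTop (nhds B))
    (hfast : ∀ ε : ℝ, 0 < ε → ∃ n, A - (a n : ℝ) < ε * (B - (b n : ℝ))) :
    ¬ MLRandom A := by
  intro hrand
  -- basic order facts
  have hmaR : Monotone fun n => ((a n : ℝ)) := fun i j hij => by
    dsimp only
    exact_mod_cast hma.monotone hij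
  have hmbR : Monotone fun n => ((b n : ℝ)) := fun i j hij => by
    dsimp only
    exact_mod_cast hmb.monotone hij
  have haA : ∀ n, ((a n : ℝ)) ≤ A := fun n => hmaR.ge_of_tendsto hA n
  have hbB : ∀ n, ((b n : ℝ)) ≤ B := fun n => hmbR.ge_of_tendsto hB n
  have haA' : ∀ n, ((a n : ℝ)) < A := fun n =>
    lt_of_lt_of_le (by exact_mod_cast hma (Nat.lt_succ_self n)) (haA (n + 1))
  have hd : ∀ s : ℕ, (0 : ℝ) < ((b (s + 1) : ℝ)) - ((b s : ℝ)) := fun s => by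
    have : ((b s : ℝ)) < ((b (s + 1) : ℝ)) := by exact_mod_cast hmb (Nat.lt_succ_self s)
    linarith
  have hBb0 : (0 : ℝ) < B - ((b 0 : ℝ)) := by
    have h1 := hd 0
    have h2 := hbB 1
    linarith
  obtain ⟨M, hMgt⟩ := exists_nat_gt (B - ((b 0 : ℝ)))
  have hM0 : 0 < M := by
    by_contra h
    push_neg at h
    interval_cases M
    simp at hMgt
    linarith
  -- the rational ε and its real value
  have he_pos : ∀ k, (0 : ℝ) < ((eps M k : ℚ) : ℝ) := fun k => by
    exact_mod_cast eps_pos M k hM0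
  have he_val : ∀ k, ((eps M k : ℚ) : ℝ) = ((2 * M * 2 ^ k : ℕ) : ℝ)⁻¹ := fun k => by
    rw [eps_eq M k hM0]
    push_cast
    ring
  -- interval unfolding
  have hIoo : ∀ k s, intervalOf (testW a b M k s) =
      Set.Ioo
        (max ((frontier a b (eps M k) s : ℚ) : ℝ) ((a s : ℝ))
          - ((eps M k : ℚ) : ℝ) * (((b (s + 1) : ℝ)) - ((b s : ℝ))))
        (max ((frontier a b (eps M k) s : ℚ) : ℝ) ((a s : ℝ))
          + ((eps M k : ℚ) : ℝ) * (((b (s + 1) : ℝ)) - ((b s : ℝ)))) := by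
    intro k s
    rw [testW_fst]
    show Set.Ioo _ _ = _
    congr 1 <;> push_cast <;> ring
  -- measure estimate
  have hmeas : ∀ k, volume (⋃ i, intervalOf (testW a b M k i)) ≤ (2 : ℝ≥0∞)⁻¹ ^ k := by
    intro k
    set e : ℝ := ((eps M k : ℚ) : ℝ) with he_def
    have he := he_pos k
    calc volume (⋃ i, intervalOf (testW a b M k i))
        ≤ ∑' s, volume (intervalOf (testW a b M k s)) := measure_iUnion_le _
      _ = ∑' s, ENNReal.ofReal (2 * (e * (((b (s + 1) : ℝ)) - ((b s : ℝ))))) := by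
          apply tsum_congr
          intro s
          rw [hIoo k s, Real.volume_Ioo]
          congr 1
          ring
      _ ≤ (2 : ℝ≥0∞)⁻¹ ^ k := by
          rw [ENNReal.tsum_eq_iSup_sum]
          apply iSup_le
          intro F
          obtain ⟨N, hN⟩ := F.exists_nat_subset_range
          have hterm : ∀ s : ℕ, (0 : ℝ) ≤ 2 * (e * (((b (s + 1) : ℝ)) - ((b s : ℝ)))) :=
            fun s => by have := hd s; positivity
          calc ∑ s ∈ F, ENNReal.ofReal (2 * (e * (((b (s + 1) : ℝ)) - ((b s : ℝ)))))
              ≤ ∑ s ∈ Finset.range N,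
                  ENNReal.ofReal (2 * (e * (((b (s + 1) : ℝ)) - ((b s : ℝ))))) :=
                Finset.sum_le_sum_of_subset hN
            _ = ENNReal.ofReal (∑ s ∈ Finset.range N,
                  (2 * (e * (((b (s + 1) : ℝ)) - ((b s : ℝ)))))) :=
                (ENNReal.ofReal_sum_of_nonneg (fun s _ => hterm s)).symm
            _ ≤ ENNReal.ofReal ((2 : ℝ)⁻¹ ^ k) := by
                apply ENNReal.ofReal_le_ofReal
                have hsum : ∑ s ∈ Finset.range N,
                    (2 * (e * (((b (s + 1) : ℝ)) - ((b s : ℝ))))) =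
                    (2 * e) * (((b N : ℝ)) - ((b 0 : ℝ))) := by
                  rw [show (fun s => 2 * (e * (((b (s + 1) : ℝ)) - ((b s : ℝ))))) =
                      (fun s => (2 * e) * (((b (s + 1) : ℝ)) - ((b s : ℝ)))) from
                    funext fun s => by ring]
                  rw [← Finset.mul_sum]
                  congr 1
                  exact Finset.sum_range_sub (fun i => ((b i : ℝ))) N
                rw [hsum]
                have h1 : ((b N : ℝ)) - ((b 0 : ℝ)) ≤ (M : ℝ) := by
                  have := hbB N
                  linarith
                have h2 : (2 * e) * (((b N : ℝ)) - ((b 0 : ℝ))) ≤ (2 * e) * (M : ℝ) := by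
                  apply mul_le_mul_of_nonneg_left h1 (by positivity)
                have h3 : (2 * e) * (M : ℝ) = (2 : ℝ)⁻¹ ^ k := by
                  rw [he_def, he_val k]
                  have hM' : ((M : ℝ)) ≠ 0 := by positivity
                  have h2k : ((2 : ℝ) ^ k) ≠ 0 := by positivity
                  push_cast
                  field_simp
                  try ring
                  rw [← mul_pow]; norm_num
                linarith
            _ = (2 : ℝ≥0∞)⁻¹ ^ k := by
                rw [ENNReal.ofReal_pow (by norm_num : (0:ℝ) ≤ 2⁻¹)]
                congr 1
                rw [ENNReal.ofReal_inv_of_pos (by norm_num : (0:ℝ) < 2)]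
                norm_num
  -- the covering property
  have hcover : ∀ k, A ∈ ⋃ i, intervalOf (testW a b M k i) := by
    intro k
    by_contra hA_not
    have hnot : ∀ s, A ∉ intervalOf (testW a b M k s) :=
      fun s hs => hA_not (Set.mem_iUnion.mpr ⟨s, hs⟩)
    set e : ℝ := ((eps M k : ℚ) : ℝ) with he_def
    have he := he_pos k
    set Fr : ℕ → ℝ := fun s => ((frontier a b (eps M k) s : ℚ) : ℝ) with hFr_def
    set Lr : ℕ → ℝ := fun s => max (Fr s) ((a s : ℝ)) with hLr_def
    have hnot' : ∀ s, A ∉ Set.Ioo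
        (Lr s - e * (((b (s + 1) : ℝ)) - ((b s : ℝ))))
        (Lr s + e * (((b (s + 1) : ℝ)) - ((b s : ℝ)))) := by
      intro s
      have := hnot s
      rwa [hIoo k s] at this
    have hFrS : ∀ s, Fr (s + 1) = Lr s + e * (((b (s + 1) : ℝ)) - ((b s : ℝ))) := by
      intro s
      rw [hFr_def]
      show ((frontier a b (eps M k) (s+1) : ℚ) : ℝ) = _
      rw [frontier_succ]
      push_cast
      rfl
    -- frontier stays below A
    have hFle : ∀ s, Fr s ≤ A := by
      intro s
      induction s with
      | zero =>
        show ((a 0 : ℚ) : ℝ) ≤ A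
        exact haA 0
      | succ t ih =>
        by_contra hgt
        push_neg at hgt
        have hL : Lr t ≤ A := max_le ih (haA t)
        apply hnot' t
        constructor
        · have := hd t
          nlinarith
        · rw [← hFrS t]
          exact hgt
    have hLle : ∀ s, Lr s ≤ A := fun s => max_le (hFle s) (haA s)
    -- each step pushes the frontier
    have hstep : ∀ s, Lr s + e * (((b (s + 1) : ℝ)) - ((b s : ℝ))) ≤ A := by
      intro s
      by_contra hgt
      push_neg at hgt
      apply hnot' s
      constructor
      · have := hd s
        have := hLle s
        nlinarith
      · exact hgt
    have hmono : ∀ s, Lr s + e * (((b (s + 1) : ℝ)) - ((b s : ℝ))) ≤ Lr (s + 1) := by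
      intro s
      rw [← hFrS s]
      exact le_max_left _ _
    have htel : ∀ n s, n ≤ s → Lr n + e * (((b s : ℝ)) - ((b n : ℝ))) ≤ Lr s := by
      intro n s hns
      induction s with
      | zero =>
        have : n = 0 := Nat.le_zero.mp hns
        subst this
        simp
      | succ t ih =>
        rcases Nat.lt_or_ge n (t + 1) with h | h
        · have hnt : n ≤ t := Nat.lt_succ_iff.mp h
          have h1 := ih hnt
          have h2 := hmono t
          have := hd t
          nlinarith [mul_le_mul_of_nonneg_left (le_refl (((b (t+1) : ℝ)) - ((b t : ℝ)))) he.le]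
        · have : n = t + 1 := le_antisymm hns h
          subst this
          simp
    -- apply the speed hypothesis
    obtain ⟨n, hn⟩ := hfast e he
    -- limit along s of the telescoped bound
    have hlim : Tendsto (fun s => Lr n + e * (((b s : ℝ)) - ((b n : ℝ)))) atTop
        (nhds (Lr n + e * (B - ((b n : ℝ))))) := by
      apply Filter.Tendsto.const_add
      apply Filter.Tendsto.const_mul
      exact hB.sub_const _
    have hlimle : Lr n + e * (B - ((b n : ℝ))) ≤ A := by
      apply le_of_tendsto hlim
      rw [Filter.eventually_atTop]
      exact ⟨n, fun s hs => (htel n s hs).trans (hLle s)⟩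
    have hLrn : ((a n : ℝ)) ≤ Lr n := le_max_right _ _
    have : A < Lr n + e * (B - ((b n : ℝ))) := by linarith
    linarith
  obtain ⟨k, hk⟩ := hrand (testW a b M) ⟨computable_testW a b ha hb M, hmeas⟩
  exact hk (hcover k)
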